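/- Let u₀ ∈ L¹(ℝ^d) be nonnegative and u(t,·) = u₀ * Γ(t,·) the heat semigroup solution. For 0 ≤ k < d and any x₀ ∈ ℝ^d there is C = C(d,k), independent of x₀, such that ∫_{ℝ^d} u(t,x)(1+|x−x₀|)^{−k} dx ≤ C ‖u₀‖₁ (1+t)^{−k/2} for all t ≥ 0. -/

import Mathlib

open MeasureTheory Real

open scoped ENNReal NNReal
open Set Metric
open scoped ENNReal NNReal
set_option maxHeartbeats 1000000

lemma aux_ball_bound (d : ℕ) (hd : 1 ≤ d) (k : ℝ) (hk0 : 0 ≤ k) (hkd : k < d)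
    (x₀ : EuclideanSpace ℝ (Fin d)) (R : ℝ) (hR : 0 < R) :
    ∫⁻ x in ball x₀ R, ENNReal.ofReal ((1 + ‖x - x₀‖) ^ (-k)) ≤
      ENNReal.ofReal (((d : ℝ) * (volume (ball (0 : EuclideanSpace ℝ (Fin d)) 1)).toReal / ((d : ℝ) - k))
        * R ^ ((d : ℝ) - k)) := by
  classical
  haveI : Nontrivial (EuclideanSpace ℝ (Fin d)) := by
    refine Module.nontrivial_of_finrank_pos (R := ℝ) ?_
    rw [finrank_euclideanSpace_fin]
    omega
  have hdk : (0 : ℝ) < (d : ℝ) - k := by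
    have : (1 : ℝ) ≤ d := by exact_mod_cast hd
    linarith
  -- translate
  have htrans : ∫⁻ x in ball x₀ R, ENNReal.ofReal ((1 + ‖x - x₀‖) ^ (-k)) =
      ∫⁻ z in ball (0 : EuclideanSpace ℝ (Fin d)) R, ENNReal.ofReal ((1 + ‖z‖) ^ (-k)) := by
    rw [← lintegral_indicator measurableSet_ball, ← lintegral_indicator measurableSet_ball]
    rw [← lintegral_add_right_eq_self
      (fun x => (ball (0 : EuclideanSpace ℝ (Fin d)) R).indicator
        (fun z => ENNReal.ofReal ((1 + ‖z‖) ^ (-k))) x) (-x₀)]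
    congr 1 with x
    rw [Set.indicator_apply, Set.indicator_apply]
    have hx : x + -x₀ = x - x₀ := by abel
    simp only [mem_ball, dist_eq_norm, sub_zero, dist_zero_right, hx]
  rw [htrans]
  -- to Bochner
  have hw_meas : Measurable fun z : EuclideanSpace ℝ (Fin d) => (1 + ‖z‖) ^ (-k) := by fun_prop
  have hw_nonneg : ∀ z : EuclideanSpace ℝ (Fin d), 0 ≤ (1 + ‖z‖) ^ (-k) := fun z => by positivity
  have hint : IntegrableOn (fun z : EuclideanSpace ℝ (Fin d) => (1 + ‖z‖) ^ (-k))
      (ball (0 : EuclideanSpace ℝ (Fin d)) R) := by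
    apply Measure.integrableOn_of_bounded measure_ball_lt_top.ne
      hw_meas.aestronglyMeasurable (M := 1)
    filter_upwards with z
    rw [Real.norm_of_nonneg (hw_nonneg z)]
    exact Real.rpow_le_one_of_one_le_of_nonpos (by linarith [norm_nonneg z]) (by linarith)
  rw [← ofReal_integral_eq_lintegral_ofReal hint (Filter.Eventually.of_forall fun z => hw_nonneg z)]
  apply ENNReal.ofReal_le_ofReal
  -- radial
  set φ : ℝ → ℝ := fun r => if r < R then (1 + r) ^ (-k) else 0 with hφ
  have hrad : ∫ z in ball (0 : EuclideanSpace ℝ (Fin d)) R, (1 + ‖z‖) ^ (-k) =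
      ∫ z : EuclideanSpace ℝ (Fin d), φ ‖z‖ := by
    rw [← integral_indicator measurableSet_ball]
    congr 1 with z
    simp [Set.indicator_apply, mem_ball_zero_iff, hφ]
  rw [hrad, MeasureTheory.integral_fun_norm_addHaar volume φ]
  rw [nsmul_eq_mul, smul_eq_mul, finrank_euclideanSpace_fin]
  have hstep1 : ∫ y in Ioi (0:ℝ), y ^ (d - 1) • φ y =
      ∫ y in Ioo (0:ℝ) R, y ^ (d - 1) * (1 + y) ^ (-k) := by
    rw [show (∫ y in Ioi (0:ℝ), y ^ (d - 1) • φ y) =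
        ∫ y in Ioi (0:ℝ), (Ioo (0:ℝ) R).indicator (fun y => y ^ (d-1) * (1+y) ^ (-k)) y from
      setIntegral_congr_fun measurableSet_Ioi (fun y hy => by
        simp only [hφ, smul_eq_mul, Set.indicator_apply, mem_Ioo]
        by_cases h : y < R
        · simp [h, mem_Ioi.mp hy]
        · simp [h])]
    rw [setIntegral_indicator measurableSet_Ioo,
      Set.inter_eq_self_of_subset_right Ioo_subset_Ioi_self]
  rw [hstep1]
  have hcast : ((d - 1 : ℕ) : ℝ) = (d : ℝ) - 1 := by
    have := hd; push_cast [Nat.cast_sub hd]; ring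
  have hint1 : IntegrableOn (fun y : ℝ => y ^ (d - 1) * (1 + y) ^ (-k)) (Ioo 0 R) := by
    apply (ContinuousOn.integrableOn_compact isCompact_Icc ?_).mono_set Ioo_subset_Icc_self
    apply (continuousOn_pow (d-1)).mul
    apply ContinuousOn.rpow_const (by fun_prop)
    intro y hy
    exact Or.inl (by simp only [Set.mem_Icc] at hy; intro h; linarith [hy.1])
  have hint2 : IntegrableOn (fun y : ℝ => y ^ ((d : ℝ) - 1 - k)) (Ioo 0 R) := by
    apply IntegrableOn.mono_set _ Ioo_subset_Ioc_self
    rw [← intervalIntegrable_iff_integrableOn_Ioc_of_le hR.le]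
    apply intervalIntegral.intervalIntegrable_rpow'
    linarith
  have hstep2 : ∫ y in Ioo (0:ℝ) R, y ^ (d - 1) * (1 + y) ^ (-k) ≤
      ∫ y in Ioo (0:ℝ) R, y ^ ((d : ℝ) - 1 - k) := by
    apply setIntegral_mono_on hint1 hint2 measurableSet_Ioo
    intro y hy
    obtain ⟨hy0, hyR⟩ := hy
    calc y ^ (d - 1) * (1 + y) ^ (-k) ≤ y ^ (d - 1) * y ^ (-k) := by
          apply mul_le_mul_of_nonneg_left _ (by positivity)
          exact Real.rpow_le_rpow_of_nonpos hy0 (by linarith) (by linarith)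
      _ = y ^ ((d : ℝ) - 1 - k) := by
          rw [← Real.rpow_natCast y (d - 1), ← Real.rpow_add hy0, hcast]
          ring_nf
  have hstep3 : ∫ y in Ioo (0:ℝ) R, y ^ ((d : ℝ) - 1 - k) = R ^ ((d:ℝ) - k) / ((d:ℝ) - k) := by
    rw [← integral_Ioc_eq_integral_Ioo, ← intervalIntegral.integral_of_le hR.le,
      integral_rpow (Or.inl (by linarith))]
    rw [Real.zero_rpow (by linarith : ((d:ℝ) - 1 - k) + 1 ≠ 0)]
    ring_nf
  have hmono : ∫ y in Ioo (0:ℝ) R, y ^ (d - 1) * (1 + y) ^ (-k) ≤ R ^ ((d:ℝ) - k) / ((d:ℝ) - k) :=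
    hstep3 ▸ hstep2
  calc (d : ℝ) * ((volume (ball (0 : EuclideanSpace ℝ (Fin d)) 1)).toReal *
        ∫ y in Ioo (0:ℝ) R, y ^ (d - 1) * (1 + y) ^ (-k))
      ≤ (d : ℝ) * ((volume (ball (0 : EuclideanSpace ℝ (Fin d)) 1)).toReal *
        (R ^ ((d:ℝ) - k) / ((d:ℝ) - k))) := by
        gcongr
    _ = (d : ℝ) * (volume (ball (0 : EuclideanSpace ℝ (Fin d)) 1)).toReal / ((d:ℝ) - k)
        * R ^ ((d:ℝ) - k) := by ring
open MeasureTheory Real Set Metric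

lemma aux_gauss_int (d : ℕ) (t : ℝ) (ht : 0 < t) :
    Integrable (fun z : EuclideanSpace ℝ (Fin d) =>
      (4 * π * t) ^ (-(d : ℝ)/2) * Real.exp (-‖z‖^2 / (4*t))) := by
  have hb : (0:ℝ) < (4*t)⁻¹ := by positivity
  have h1 := (GaussianFourier.integrable_cexp_neg_mul_sq_norm_add
    (V := EuclideanSpace ℝ (Fin d)) (b := ((4*t)⁻¹ : ℝ)) (by simpa using hb) 0 0).norm
  have h2 : Integrable (fun z : EuclideanSpace ℝ (Fin d) => Real.exp (-‖z‖^2 / (4*t))) := by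
    apply h1.congr
    filter_upwards with z
    have heq : (-((((4*t)⁻¹ : ℝ)) : ℂ) * (‖z‖ : ℂ)^2 +
        0 * ((inner ℝ (0 : EuclideanSpace ℝ (Fin d)) z : ℝ) : ℂ)) = ((-‖z‖^2/(4*t) : ℝ) : ℂ) := by
      push_cast
      field_simp
      simp
    rw [Complex.norm_exp, heq, Complex.ofReal_re]
  exact h2.const_mul _

lemma aux_gauss_mass (d : ℕ) (t : ℝ) (ht : 0 < t) :
    ∫⁻ z : EuclideanSpace ℝ (Fin d),
      ENNReal.ofReal ((4 * π * t) ^ (-(d : ℝ)/2) * Real.exp (-‖z‖^2 / (4*t))) = 1 := by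
  have hb : (0:ℝ) < (4*t)⁻¹ := by positivity
  rw [← ofReal_integral_eq_lintegral_ofReal (aux_gauss_int d t ht)
    (Filter.Eventually.of_forall fun z => by positivity)]
  have hval : ∫ z : EuclideanSpace ℝ (Fin d), Real.exp (-(4*t)⁻¹ * ‖z‖^2) =
      (π / (4*t)⁻¹) ^ ((Module.finrank ℝ (EuclideanSpace ℝ (Fin d)) : ℝ) / 2) :=
    GaussianFourier.integral_rexp_neg_mul_sq_norm hb
  rw [finrank_euclideanSpace_fin] at hval
  have harg : ∀ z : EuclideanSpace ℝ (Fin d), -‖z‖^2 / (4*t) = -(4*t)⁻¹ * ‖z‖^2 := by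
    intro z; field_simp
  have : ∫ z : EuclideanSpace ℝ (Fin d),
      (4 * π * t) ^ (-(d : ℝ)/2) * Real.exp (-‖z‖^2 / (4*t)) = 1 := by
    rw [integral_const_mul]
    simp_rw [harg]
    rw [hval]
    have h4 : π / (4*t)⁻¹ = 4 * π * t := by field_simp
    rw [h4, ← Real.rpow_add (by positivity),
      show -(d:ℝ)/2 + (d:ℝ)/2 = 0 by ring, Real.rpow_zero]
  rw [this, ENNReal.ofReal_one]
open MeasureTheory Real Set Metric

lemma aux_main (d : ℕ) (hd : 1 ≤ d) (k : ℝ) (hk0 : 0 ≤ k) (hkd : k < d) :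
    ∃ C : ℝ, 0 < C ∧
      ∀ (u₀ : EuclideanSpace ℝ (Fin d) → ℝ), Integrable u₀ → (∀ y, 0 ≤ u₀ y) →
      ∀ (x₀ : EuclideanSpace ℝ (Fin d)) (t : ℝ), 0 ≤ t →
        (∫ x : EuclideanSpace ℝ (Fin d),
            (∫ y : EuclideanSpace ℝ (Fin d),
              (4 * π * t) ^ (-(d : ℝ) / 2) * Real.exp (-‖x - y‖ ^ 2 / (4 * t)) * u₀ y)
              * (1 + ‖x - x₀‖) ^ (-k))
          ≤ C * (∫ y, u₀ y) * (1 + t) ^ (-k / 2) := by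
  classical
  have hdk : (0 : ℝ) < (d : ℝ) - k := by
    have : (1 : ℝ) ≤ d := by exact_mod_cast hd
    linarith
  set mB : ℝ := (volume (ball (0 : EuclideanSpace ℝ (Fin d)) 1)).toReal with hmB
  have hmB0 : 0 ≤ mB := ENNReal.toReal_nonneg
  set c₁ : ℝ := (d : ℝ) * mB / ((d : ℝ) - k) with hc₁
  have hc₁0 : 0 ≤ c₁ := by positivity
  set A : ℝ := (4 * π) ^ (-(d : ℝ) / 2) * c₁ with hA
  have hA0 : 0 ≤ A := by positivity
  refine ⟨2 ^ (k / 2) * (A + 2), by positivity, ?_⟩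
  intro u₀ hu hu0 x₀ t ht
  set C : ℝ := 2 ^ (k / 2) * (A + 2) with hC
  have hC0 : 0 < C := by positivity
  set M : ℝ := ∫ y, u₀ y with hM
  have hM0 : 0 ≤ M := integral_nonneg hu0
  have h2k : (1 : ℝ) ≤ 2 ^ (k / 2) := by
    rw [show (1:ℝ) = (2:ℝ) ^ (0:ℝ) by simp]
    exact Real.rpow_le_rpow_of_exponent_le one_le_two (by positivity)
  have hP0 : 0 < (1 + t) ^ (-k / 2) := Real.rpow_pos_of_pos (by linarith) _
  rcases eq_or_lt_of_le ht with rfl | ht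
  · -- t = 0
    have hz : (4 * π * (0:ℝ)) ^ (-(d : ℝ) / 2) = 0 := by
      rw [mul_zero, Real.zero_rpow]
      intro h
      rw [div_eq_zero_iff] at h
      rcases h with h | h
      · simp only [neg_eq_zero, Nat.cast_eq_zero] at h; omega
      · norm_num at h
    simp only [hz, zero_mul, integral_zero]
    positivity
  -- t > 0
  set a : ℝ := (4 * π * t) ^ (-(d : ℝ) / 2) with ha
  have ha0 : 0 < a := Real.rpow_pos_of_pos (by positivity) _
  set κ : EuclideanSpace ℝ (Fin d) → ℝ := fun z => a * Real.exp (-‖z‖ ^ 2 / (4 * t)) with hκ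
  have hκcont : Continuous κ := by fun_prop
  have hκ0 : ∀ z, 0 ≤ κ z := fun z => by positivity
  have hκle : ∀ z, κ z ≤ a := by
    intro z
    have : Real.exp (-‖z‖ ^ 2 / (4 * t)) ≤ 1 := by
      rw [Real.exp_le_one_iff, neg_div, neg_nonpos]
      positivity
    calc κ z ≤ a * 1 := mul_le_mul_of_nonneg_left this ha0.le
      _ = a := mul_one a
  -- measurable nonneg representative
  obtain ⟨v0, hv0, huv0⟩ := hu.1
  set v : EuclideanSpace ℝ (Fin d) → ℝ := fun y => max (v0 y) 0 with hv
  have hvmeas : Measurable v := hv0.measurable.max measurable_const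
  have hvnn : ∀ y, 0 ≤ v y := fun y => le_max_right _ _
  have hveq : u₀ =ᵐ[volume] v := by
    filter_upwards [huv0] with y hy
    rw [hv]; simp only [← hy]
    exact (max_eq_left (hu0 y)).symm
  set Lv : ℝ≥0∞ := ∫⁻ y, ENNReal.ofReal (v y) with hLvdef
  have hLv : Lv = ENNReal.ofReal M := by
    have h1 : ∫⁻ y, ENNReal.ofReal (v y) = ∫⁻ y, ENNReal.ofReal (u₀ y) :=
      lintegral_congr_ae (by filter_upwards [hveq] with y hy; rw [hy])
    rw [hLvdef, h1, ← ofReal_integral_eq_lintegral_ofReal hu (Filter.Eventually.of_forall hu0)]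
  set W : EuclideanSpace ℝ (Fin d) → ℝ≥0∞ :=
    fun x => ENNReal.ofReal ((1 + ‖x - x₀‖) ^ (-k)) with hW
  have hWmeas : Measurable W := by fun_prop
  set Φ : EuclideanSpace ℝ (Fin d) → ℝ≥0∞ :=
    fun x => ∫⁻ y, ENNReal.ofReal (κ (x - y)) * ENNReal.ofReal (v y) with hΦ
  have huncurry : Measurable (Function.uncurry fun (x y : EuclideanSpace ℝ (Fin d)) =>
      ENNReal.ofReal (κ (x - y)) * ENNReal.ofReal (v y)) := by
    apply Measurable.mul (f := fun p : EuclideanSpace ℝ (Fin d) × EuclideanSpace ℝ (Fin d) => ENNReal.ofReal (κ (p.1 - p.2))) (g := fun p => ENNReal.ofReal (v p.2))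
    · exact (hκcont.measurable.comp (measurable_fst.sub measurable_snd)).ennreal_ofReal
    · exact (hvmeas.comp measurable_snd).ennreal_ofReal
  have hΦmeas : Measurable Φ := huncurry.lintegral_prod_right
  have hΦle : ∀ x, Φ x ≤ ENNReal.ofReal a * Lv := by
    intro x
    calc Φ x ≤ ∫⁻ y, ENNReal.ofReal a * ENNReal.ofReal (v y) :=
          lintegral_mono fun y =>
            mul_le_mul_left (ENNReal.ofReal_le_ofReal (hκle _)) _
      _ = ENNReal.ofReal a * Lv := lintegral_const_mul' _ _ ENNReal.ofReal_ne_top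
  have hΦtop : ∀ x, Φ x ≠ ⊤ := by
    intro x
    refine ne_top_of_le_ne_top ?_ (hΦle x)
    rw [hLv]
    exact ENNReal.mul_ne_top ENNReal.ofReal_ne_top ENNReal.ofReal_ne_top
  have hgauss : ∫⁻ z : EuclideanSpace ℝ (Fin d), ENNReal.ofReal (κ z) = 1 := by
    rw [hκ]; exact aux_gauss_mass d t ht
  have hΦtot : ∫⁻ x, Φ x = Lv := by
    rw [hΦ]
    rw [lintegral_lintegral_swap huncurry.aemeasurable]
    have : ∀ y : EuclideanSpace ℝ (Fin d),
        ∫⁻ x, ENNReal.ofReal (κ (x - y)) * ENNReal.ofReal (v y) = ENNReal.ofReal (v y) := by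
      intro y
      rw [lintegral_mul_const' _ _ ENNReal.ofReal_ne_top,
        lintegral_sub_right_eq_self (fun z => ENNReal.ofReal (κ z)) y, hgauss, one_mul]
    simp_rw [this]
    rfl
  have hinner : ∀ x, (∫ y, κ (x - y) * u₀ y) = (Φ x).toReal := by
    intro x
    have hcont : Continuous fun y : EuclideanSpace ℝ (Fin d) => κ (x - y) :=
      hκcont.comp (by fun_prop)
    rw [integral_eq_lintegral_of_nonneg_ae
      (Filter.Eventually.of_forall fun y => mul_nonneg (hκ0 _) (hu0 y))
      (hcont.aestronglyMeasurable.mul hu.1)]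
    congr 1
    apply lintegral_congr_ae
    filter_upwards [hveq] with y hy
    rw [ENNReal.ofReal_mul (hκ0 _), hy]
  have houter : (∫ x : EuclideanSpace ℝ (Fin d),
      (∫ y, κ (x - y) * u₀ y) * (1 + ‖x - x₀‖) ^ (-k)) =
      (∫⁻ x, Φ x * W x).toReal := by
    simp_rw [hinner]
    rw [integral_eq_lintegral_of_nonneg_ae
      (Filter.Eventually.of_forall fun x =>
        mul_nonneg ENNReal.toReal_nonneg (by positivity))
      ((hΦmeas.ennreal_toReal.mul (by fun_prop)).aestronglyMeasurable)]
    congr 1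
    apply lintegral_congr_ae
    filter_upwards with x
    rw [ENNReal.ofReal_mul ENNReal.toReal_nonneg, ENNReal.ofReal_toReal (hΦtop x)]
  have hgoal_eq : (∫ x : EuclideanSpace ℝ (Fin d),
      (∫ y : EuclideanSpace ℝ (Fin d),
        (4 * π * t) ^ (-(d : ℝ) / 2) * Real.exp (-‖x - y‖ ^ 2 / (4 * t)) * u₀ y)
        * (1 + ‖x - x₀‖) ^ (-k)) = (∫⁻ x, Φ x * W x).toReal := houter
  rw [hgoal_eq]
  apply ENNReal.toReal_le_of_le_ofReal (by positivity)
  -- now bound the lintegral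
  rcases le_or_gt t 1 with ht1 | ht1
  · -- small time
    have hWle : ∀ x, W x ≤ 1 := by
      intro x
      rw [hW]
      refine ENNReal.ofReal_le_one.2 ?_
      exact Real.rpow_le_one_of_one_le_of_nonpos (by linarith [norm_nonneg (x - x₀)])
        (by linarith)
    calc ∫⁻ x, Φ x * W x ≤ ∫⁻ x, Φ x := by
          apply lintegral_mono
          intro x
          calc Φ x * W x ≤ Φ x * 1 := mul_le_mul_right (hWle x) _
            _ = Φ x := mul_one _
      _ = ENNReal.ofReal M := by rw [hΦtot, hLv]
      _ ≤ ENNReal.ofReal (C * M * (1 + t) ^ (-k / 2)) := by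
          apply ENNReal.ofReal_le_ofReal
          have h2 : (2:ℝ) ^ (-k / 2) ≤ (1 + t) ^ (-k / 2) :=
            Real.rpow_le_rpow_of_nonpos (by linarith) (by linarith) (by linarith)
          have h3 : (2:ℝ) ^ (k / 2) * 2 ^ (-k / 2) = 1 := by
            rw [← Real.rpow_add (by norm_num : (0:ℝ) < 2),
              show k / 2 + -k / 2 = 0 by ring, Real.rpow_zero]
          have h4 : 1 ≤ C * (1 + t) ^ (-k / 2) := by
            calc (1:ℝ) = (2 ^ (k / 2) * 2 ^ (-k / 2)) * 1 := by rw [h3]; ring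
              _ ≤ (2 ^ (k / 2) * 2 ^ (-k / 2)) * (A + 2) := by nlinarith
              _ = (2 ^ (k/2) * (A + 2)) * 2 ^ (-k / 2) := by ring
              _ ≤ C * (1 + t) ^ (-k / 2) := by
                  rw [hC]
                  apply mul_le_mul_of_nonneg_left h2 (by positivity)
          calc M = 1 * M := (one_mul M).symm
            _ ≤ (C * (1 + t) ^ (-k / 2)) * M := mul_le_mul_of_nonneg_right h4 hM0
            _ = C * M * (1 + t) ^ (-k / 2) := by ring
  · -- large time
    set R : ℝ := Real.sqrt t with hRdef
    have hR0 : 0 < R := Real.sqrt_pos.2 ht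
    have hsq : R ^ 2 = t := Real.sq_sqrt ht.le
    have hane : ENNReal.ofReal a * Lv ≠ ⊤ := by
      rw [hLv]
      exact ENNReal.mul_ne_top ENNReal.ofReal_ne_top ENNReal.ofReal_ne_top
    have hsplit := lintegral_add_compl (μ := volume) (fun x => Φ x * W x)
      (measurableSet_ball : MeasurableSet (ball x₀ R))
    -- bound on ball
    have hball : ∫⁻ x in ball x₀ R, Φ x * W x ≤
        ENNReal.ofReal (a * M * (c₁ * R ^ ((d:ℝ) - k))) := by
      calc ∫⁻ x in ball x₀ R, Φ x * W x
          ≤ ∫⁻ x in ball x₀ R, (ENNReal.ofReal a * Lv) * W x :=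
            lintegral_mono fun x => mul_le_mul_left (hΦle x) _
        _ = (ENNReal.ofReal a * Lv) * ∫⁻ x in ball x₀ R, W x := by
            rw [lintegral_const_mul' _ _ hane]
        _ ≤ (ENNReal.ofReal a * ENNReal.ofReal M) * ENNReal.ofReal (c₁ * R ^ ((d:ℝ) - k)) := by
            rw [hLv]
            exact mul_le_mul_right (aux_ball_bound d hd k hk0 hkd x₀ R hR0) _
        _ = ENNReal.ofReal (a * M * (c₁ * R ^ ((d:ℝ) - k))) := by
            rw [← ENNReal.ofReal_mul ha0.le, ← ENNReal.ofReal_mul (by positivity)]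
    -- bound off ball
    have hoff : ∫⁻ x in (ball x₀ R)ᶜ, Φ x * W x ≤
        ENNReal.ofReal ((1 + t) ^ (-k / 2) * M) := by
      have hWoff : ∀ x ∈ (ball x₀ R)ᶜ, W x ≤ ENNReal.ofReal ((1 + t) ^ (-k / 2)) := by
        intro x hx
        rw [hW]
        apply ENNReal.ofReal_le_ofReal
        have hxR : R ≤ ‖x - x₀‖ := by
          simpa [dist_eq_norm, not_lt] using hx
        have hsqrt : Real.sqrt (1 + t) ≤ 1 + ‖x - x₀‖ := by
          calc Real.sqrt (1 + t) ≤ Real.sqrt ((1 + R) ^ 2) := by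
                apply Real.sqrt_le_sqrt
                nlinarith
            _ = 1 + R := Real.sqrt_sq (by linarith)
            _ ≤ 1 + ‖x - x₀‖ := by linarith
        have h1t : (1 + t) ^ (-k / 2) = (Real.sqrt (1 + t)) ^ (-k) := by
          rw [Real.sqrt_eq_rpow, ← Real.rpow_mul (by linarith)]
          congr 1
          ring
        rw [h1t]
        exact Real.rpow_le_rpow_of_nonpos (Real.sqrt_pos.2 (by linarith)) hsqrt
          (by linarith)
      calc ∫⁻ x in (ball x₀ R)ᶜ, Φ x * W x
          ≤ ∫⁻ x in (ball x₀ R)ᶜ, Φ x * ENNReal.ofReal ((1 + t) ^ (-k / 2)) := by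
            apply setLIntegral_mono (hΦmeas.mul_const _)
            intro x hx
            exact mul_le_mul_right (hWoff x hx) _
        _ = (∫⁻ x in (ball x₀ R)ᶜ, Φ x) * ENNReal.ofReal ((1 + t) ^ (-k / 2)) :=
            lintegral_mul_const' _ _ ENNReal.ofReal_ne_top
        _ ≤ (∫⁻ x, Φ x) * ENNReal.ofReal ((1 + t) ^ (-k / 2)) :=
            mul_le_mul_left (setLIntegral_le_lintegral _ _) _
        _ = ENNReal.ofReal M * ENNReal.ofReal ((1 + t) ^ (-k / 2)) := by rw [hΦtot, hLv]
        _ = ENNReal.ofReal ((1 + t) ^ (-k / 2) * M) := by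
            rw [← ENNReal.ofReal_mul hM0]; ring_nf
    calc ∫⁻ x, Φ x * W x
        = (∫⁻ x in ball x₀ R, Φ x * W x) + ∫⁻ x in (ball x₀ R)ᶜ, Φ x * W x := hsplit.symm
      _ ≤ ENNReal.ofReal (a * M * (c₁ * R ^ ((d:ℝ) - k))) +
          ENNReal.ofReal ((1 + t) ^ (-k / 2) * M) := add_le_add hball hoff
      _ = ENNReal.ofReal (a * M * (c₁ * R ^ ((d:ℝ) - k)) + (1 + t) ^ (-k / 2) * M) :=
          (ENNReal.ofReal_add (by positivity) (by positivity)).symm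
      _ ≤ ENNReal.ofReal (C * M * (1 + t) ^ (-k / 2)) := by
          apply ENNReal.ofReal_le_ofReal
          -- key real estimate
          have key : a * R ^ ((d:ℝ) - k) ≤ (4 * π) ^ (-(d:ℝ)/2) * (2 ^ (k/2) * (1 + t) ^ (-k/2)) := by
            have e1 : a = (4 * π) ^ (-(d:ℝ)/2) * t ^ (-(d:ℝ)/2) := by
              rw [ha, show 4 * π * t = (4 * π) * t by ring,
                Real.mul_rpow (by positivity) ht.le]
            have e2 : R ^ ((d:ℝ) - k) = t ^ (((d:ℝ) - k) / 2) := by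
              rw [hRdef, Real.sqrt_eq_rpow, ← Real.rpow_mul ht.le]
              norm_num
              ring_nf
            have e3 : t ^ (-(d:ℝ)/2) * t ^ (((d:ℝ) - k) / 2) = t ^ (-k/2) := by
              rw [← Real.rpow_add ht]
              ring_nf
            have e4 : t ^ (-k/2) ≤ 2 ^ (k/2) * (1 + t) ^ (-k/2) := by
              have h2t : (1:ℝ) + t ≤ 2 * t := by linarith
              have : (2 * t) ^ (-k/2) ≤ (1 + t) ^ (-k/2) :=
                Real.rpow_le_rpow_of_nonpos (by linarith) h2t (by linarith)
              have hmul : (2 * t) ^ (-k/2) = 2 ^ (-k/2) * t ^ (-k/2) :=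
                Real.mul_rpow (by norm_num) ht.le
              have h3 : (2:ℝ) ^ (k / 2) * 2 ^ (-k / 2) = 1 := by
                rw [← Real.rpow_add (by norm_num : (0:ℝ) < 2),
                  show k / 2 + -k / 2 = 0 by ring, Real.rpow_zero]
              calc t ^ (-k/2) = (2 ^ (k/2) * 2 ^ (-k/2)) * t ^ (-k/2) := by rw [h3]; ring
                _ = 2 ^ (k/2) * (2 * t) ^ (-k/2) := by rw [hmul]; ring
                _ ≤ 2 ^ (k/2) * (1 + t) ^ (-k/2) := by
                    apply mul_le_mul_of_nonneg_left this (by positivity)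
            calc a * R ^ ((d:ℝ) - k)
                = (4 * π) ^ (-(d:ℝ)/2) * (t ^ (-(d:ℝ)/2) * t ^ (((d:ℝ) - k) / 2)) := by
                  rw [e1, e2]; ring
              _ = (4 * π) ^ (-(d:ℝ)/2) * t ^ (-k/2) := by rw [e3]
              _ ≤ (4 * π) ^ (-(d:ℝ)/2) * (2 ^ (k/2) * (1 + t) ^ (-k/2)) := by
                  apply mul_le_mul_of_nonneg_left e4 (by positivity)
          have expand : a * M * (c₁ * R ^ ((d:ℝ) - k)) = (a * R ^ ((d:ℝ)-k)) * (M * c₁) := by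
            ring
          rw [expand, hC]
          have hMc : 0 ≤ M * c₁ := mul_nonneg hM0 hc₁0
          have step1 : (a * R ^ ((d:ℝ)-k)) * (M * c₁) ≤
              ((4 * π) ^ (-(d:ℝ)/2) * (2 ^ (k/2) * (1 + t) ^ (-k/2))) * (M * c₁) :=
            mul_le_mul_of_nonneg_right key hMc
          have hfin : ((4 * π) ^ (-(d:ℝ)/2) * (2 ^ (k/2) * (1 + t) ^ (-k/2))) * (M * c₁)
              + (1 + t) ^ (-k / 2) * M ≤ 2 ^ (k / 2) * (A + 2) * M * (1 + t) ^ (-k / 2) := by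
            rw [hA]
            nlinarith [mul_nonneg hM0 hP0.le, mul_le_mul_of_nonneg_left h2k (mul_nonneg hM0 hP0.le),
              mul_nonneg (mul_nonneg hMc hP0.le) (Real.rpow_nonneg (by positivity : (0:ℝ) ≤ 4*π) (-(d:ℝ)/2))]
          linarith


/-- Decay of negative moments for heat semigroup solutions, with a constant
independent of the center `x₀`. -/
theorem stmt_5 (d : ℕ) (hd : 1 ≤ d) (k : ℝ) (hk0 : 0 ≤ k) (hkd : k < d) :
    ∃ C : ℝ, 0 < C ∧
      ∀ (u₀ : EuclideanSpace ℝ (Fin d) → ℝ), Integrable u₀ → (∀ y, 0 ≤ u₀ y) →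
      ∀ (x₀ : EuclideanSpace ℝ (Fin d)) (t : ℝ), 0 ≤ t →
        (∫ x : EuclideanSpace ℝ (Fin d),
            (∫ y : EuclideanSpace ℝ (Fin d),
              (4 * π * t) ^ (-(d : ℝ) / 2) * Real.exp (-‖x - y‖ ^ 2 / (4 * t)) * u₀ y)
              * (1 + ‖x - x₀‖) ^ (-k))
          ≤ C * (∫ y, u₀ y) * (1 + t) ^ (-k / 2) := by
  exact aux_main d hd k hk0 hkd
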